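/- arXiv:2601.18474 — 2 statements merged into one kernel-verified Lean document; each statement's English description precedes it below -/
import Mathlib

section
/- Let q be a rational number with 2q ∉ ℤ. Then the set of natural numbers j for which ∑_{i=0}^{j} (−1)^(j−i) · Γ^(i)(q) · Γ^(j−i)(1−q) / (i! · (j−i)!) ≠ 0 is infinite. -/
open Real Filter Set

lemma analyticAt_realGamma {x : ℝ} (hx : ∀ n : ℤ, x ≠ n) : AnalyticAt ℝ Real.Gamma x := by
  have hC : AnalyticAt ℂ Complex.Gamma ↑x := by
    apply DifferentiableOn.analyticAt (s := (Set.range ((↑) : ℤ → ℂ))ᶜ)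
    · intro z hz
      refine (Complex.differentiableAt_Gamma z ?_).differentiableWithinAt
      intro m hm
      exact hz ⟨-m, by push_cast; rw [← hm]⟩
    · refine Complex.isOpen_compl_range_intCast.mem_nhds ?_
      rintro ⟨n, hn⟩
      exact hx n (by exact_mod_cast hn.symm)
  have h1 : AnalyticAt ℝ (fun t : ℝ => (Complex.Gamma ↑t).re) x :=
    (Complex.reCLM.analyticAt _).comp ((hC.restrictScalars).comp (Complex.ofRealCLM.analyticAt x))
  have h2 : (fun t : ℝ => (Complex.Gamma ↑t).re) = Real.Gamma := by
    funext t; rw [Complex.Gamma_ofReal, Complex.ofReal_re]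
  rwa [h2] at h1

lemma analyticAt_realSin (x : ℝ) : AnalyticAt ℝ Real.sin x := by
  have hC : AnalyticAt ℂ Complex.sin ↑x := Complex.differentiable_sin.analyticAt _
  have h1 : AnalyticAt ℝ (fun t : ℝ => (Complex.sin ↑t).re) x :=
    (Complex.reCLM.analyticAt _).comp ((hC.restrictScalars).comp (Complex.ofRealCLM.analyticAt x))
  have h2 : (fun t : ℝ => (Complex.sin ↑t).re) = Real.sin := by
    funext t; rw [Complex.sin_ofReal_re]
  rwa [h2] at h1

lemma coeff_eq_iteratedDeriv {f : ℝ → ℝ} {p : FormalMultilinearSeries ℝ ℝ ℝ} {x : ℝ}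
    {r : ENNReal} (h : HasFPowerSeriesOnBall f p x r) (n : ℕ) :
    p.coeff n = iteratedDeriv n f x / n.factorial := by
  have h1 := h.factorial_smul (1 : ℝ) n
  rw [FormalMultilinearSeries.apply_eq_pow_smul_coeff, one_pow, one_smul] at h1
  rw [iteratedDeriv_eq_iteratedFDeriv, ← h1, nsmul_eq_mul]
  field_simp


/-- For rational `q` with `2q ∉ ℤ`, the Taylor coefficients of `Γ(q+t)Γ(1−q−t)`
are nonzero for infinitely many `j`. -/
theorem gamma_reflection_coeff_nonzero_infinitely_often
    (q : ℚ) (hq : ¬ ∃ k : ℤ, 2 * q = (k : ℚ)) :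
    {j : ℕ | (∑ i ∈ Finset.range (j + 1),
        (-1 : ℝ) ^ (j - i) * iteratedDeriv i Real.Gamma (q : ℝ) *
          iteratedDeriv (j - i) Real.Gamma (1 - (q : ℝ)) /
            ((Nat.factorial i : ℝ) * (Nat.factorial (j - i) : ℝ))) ≠ 0}.Infinite := by
  set a : ℝ := (q : ℝ) with ha_def
  set c : ℕ → ℝ := fun j => ∑ i ∈ Finset.range (j + 1),
      (-1 : ℝ) ^ (j - i) * iteratedDeriv i Real.Gamma a *
        iteratedDeriv (j - i) Real.Gamma (1 - a) /
          ((Nat.factorial i : ℝ) * (Nat.factorial (j - i) : ℝ)) with hc_def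
  have haZ : ∀ n : ℤ, a ≠ n := by
    intro n h
    refine hq ⟨2 * n, ?_⟩
    rw [ha_def] at h
    have : q = (n : ℚ) := by exact_mod_cast h
    rw [this]; push_cast; ring
  have h1aZ : ∀ n : ℤ, (1 - a) ≠ n := by
    intro n h
    refine hq ⟨2 - 2 * n, ?_⟩
    rw [ha_def] at h
    have h' : (q : ℝ) = ((1 - n : ℚ) : ℝ) := by push_cast; linarith [h]
    have hq' : q = (1 - n : ℚ) := by exact_mod_cast h'
    rw [hq']; push_cast; ring
  by_contra hinf
  rw [Set.not_infinite] at hinf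
  -- power series for Gamma at a
  obtain ⟨p₁, hp₁'⟩ := analyticAt_realGamma haZ
  obtain ⟨r₁, hp₁⟩ := hp₁'
  -- power series for g₂ at 0
  set g₂ : ℝ → ℝ := fun t => Real.Gamma (1 - a - t) with hg₂_def
  have hg₂an : AnalyticAt ℝ g₂ 0 := by
    have hf : AnalyticAt ℝ (fun t : ℝ => 1 - a - t) 0 := analyticAt_const.sub analyticAt_id
    have hg : AnalyticAt ℝ Real.Gamma ((fun t : ℝ => 1 - a - t) 0) := by
      simpa using analyticAt_realGamma h1aZ
    exact hg.comp hf
  obtain ⟨p₂, hp₂'⟩ := hg₂an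
  obtain ⟨r₂, hp₂⟩ := hp₂'
  have hD2 : ∀ n, iteratedDeriv n g₂ 0 = (-1 : ℝ) ^ n * iteratedDeriv n Real.Gamma (1 - a) := by
    intro n
    have e1 : g₂ = fun t : ℝ => (fun s : ℝ => Real.Gamma (1 - a + s)) (-t) := by
      funext t; simp [hg₂_def, sub_eq_add_neg]
    rw [e1, iteratedDeriv_comp_neg n (fun s : ℝ => Real.Gamma (1 - a + s)) 0,
      iteratedDeriv_comp_const_add n Real.Gamma (1 - a), smul_eq_mul]
    norm_num
  have hc₁ : ∀ n, p₁.coeff n = iteratedDeriv n Real.Gamma a / n.factorial :=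
    coeff_eq_iteratedDeriv hp₁
  have hc₂ : ∀ n, p₂.coeff n =
      ((-1 : ℝ) ^ n * iteratedDeriv n Real.Gamma (1 - a)) / n.factorial := by
    intro n; rw [coeff_eq_iteratedDeriv hp₂ n, hD2 n]
  -- coefficients of the product series
  have hcc : ∀ n, (∑ i ∈ Finset.range (n + 1), p₁.coeff i * p₂.coeff (n - i)) = c n := by
    intro n
    refine Finset.sum_congr rfl fun i _ => ?_
    rw [hc₁ i, hc₂ (n - i)]
    have f1 : ((i.factorial : ℝ)) ≠ 0 := Nat.cast_ne_zero.mpr i.factorial_ne_zero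
    have f2 : (((n - i).factorial : ℝ)) ≠ 0 := Nat.cast_ne_zero.mpr (n - i).factorial_ne_zero
    field_simp
  -- small radius
  obtain ⟨δ, hδ0, hδ⟩ : ∃ δ : NNReal, 0 < (δ : ENNReal) ∧ (δ : ENNReal) < min r₁ r₂ :=
    ENNReal.lt_iff_exists_nnreal_btwn.mp (lt_min hp₁.r_pos hp₂.r_pos)
  have hδpos : 0 < (δ : ℝ) := by exact_mod_cast hδ0
  -- Cauchy product expansion
  have hsum : ∀ t : ℝ, ‖t‖ < (δ : ℝ) →
      Real.Gamma (a + t) * Real.Gamma (1 - a - t) = ∑' n, c n * t ^ n := by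
    intro t ht
    have htn : (‖t‖₊ : ENNReal) < (δ : ENNReal) := by
      rw [ENNReal.coe_lt_coe]; exact_mod_cast ht
    have htb₁ : t ∈ Metric.eball (0 : ℝ) r₁ := by
      rw [Metric.mem_eball, edist_zero_right]
      exact htn.trans (hδ.trans_le (min_le_left _ _))
    have htb₂ : t ∈ Metric.eball (0 : ℝ) r₂ := by
      rw [Metric.mem_eball, edist_zero_right]
      exact htn.trans (hδ.trans_le (min_le_right _ _))
    have h1 := hp₁.hasSum htb₁
    have h2 := hp₂.hasSum htb₂
    simp_rw [FormalMultilinearSeries.apply_eq_pow_smul_coeff, smul_eq_mul] at h1 h2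
    have s1 : Summable fun n => ‖t ^ n * p₁.coeff n‖ := by
      have hs := p₁.summable_norm_apply (x := t) (EMetric.ball_subset_ball hp₁.r_le htb₁)
      simpa only [FormalMultilinearSeries.apply_eq_pow_smul_coeff, smul_eq_mul] using hs
    have s2 : Summable fun n => ‖t ^ n * p₂.coeff n‖ := by
      have hs := p₂.summable_norm_apply (x := t) (EMetric.ball_subset_ball hp₂.r_le htb₂)
      simpa only [FormalMultilinearSeries.apply_eq_pow_smul_coeff, smul_eq_mul] using hs
    have key : Real.Gamma (a + t) * g₂ (0 + t) =
        ∑' n, ∑ i ∈ Finset.range (n + 1), (t ^ i * p₁.coeff i) * (t ^ (n - i) * p₂.coeff (n - i)) := by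
      rw [← h1.tsum_eq, ← h2.tsum_eq]
      exact tsum_mul_tsum_eq_tsum_sum_range_of_summable_norm s1 s2
    rw [zero_add] at key
    have : Real.Gamma (a + t) * Real.Gamma (1 - a - t) = Real.Gamma (a + t) * g₂ t := rfl
    rw [this, key]
    refine tsum_congr fun n => ?_
    rw [← hcc n, Finset.sum_mul]
    refine Finset.sum_congr rfl fun i hi => ?_
    have hi' : i ≤ n := Nat.lt_succ_iff.mp (Finset.mem_range.mp hi)
    have e : t ^ i * p₁.coeff i * (t ^ (n - i) * p₂.coeff (n - i)) =
        p₁.coeff i * p₂.coeff (n - i) * (t ^ i * t ^ (n - i)) := by ring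
    rw [e, ← pow_add, Nat.add_sub_cancel' hi']
  -- from finiteness, coefficients vanish eventually
  obtain ⟨N, hN⟩ := hinf.bddAbove
  have hzero : ∀ j, N < j → c j = 0 := by
    intro j hj
    by_contra h0
    exact absurd (hN h0) (not_le.mpr hj)
  set P : ℝ → ℝ := fun t => ∑ j ∈ Finset.range (N + 1), c j * t ^ j with hP_def
  have hP : ∀ t : ℝ, ‖t‖ < (δ : ℝ) → Real.Gamma (a + t) * Real.Gamma (1 - a - t) = P t := by
    intro t ht
    rw [hsum t ht]
    refine tsum_eq_sum fun b hb => ?_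
    have hbN : N < b := by
      by_contra hle
      exact hb (Finset.mem_range.mpr (Nat.lt_succ_of_le (Nat.le_of_not_lt hle)))
    rw [hzero b hbN, zero_mul]
  -- sin (π a) ≠ 0
  have hsina : Real.sin (Real.pi * (a + 0)) ≠ 0 := by
    rw [add_zero]
    rw [Real.sin_ne_zero_iff]
    intro n hn
    exact haZ n (by
      have := mul_left_cancel₀ Real.pi_ne_zero (by rw [← hn]; ring : Real.pi * (n : ℝ) = Real.pi * a)
      exact this.symm ▸ rfl)
  -- eventually equal to π
  have hEv : (fun t : ℝ => P t * Real.sin (Real.pi * (a + t))) =ᶠ[nhds 0] fun _ => Real.pi := by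
    have hcont : ContinuousAt (fun t : ℝ => Real.sin (Real.pi * (a + t))) 0 :=
      (Real.continuous_sin.comp (continuous_const.mul (continuous_const.add continuous_id))).continuousAt
    filter_upwards [Metric.ball_mem_nhds (0 : ℝ) hδpos, hcont.eventually_ne hsina] with t ht hne
    have ht' : ‖t‖ < (δ : ℝ) := by rwa [Metric.mem_ball, dist_zero_right] at ht
    have hrefl := Real.Gamma_mul_Gamma_one_sub (a + t)
    rw [sub_add_eq_sub_sub] at hrefl
    rw [← hP t ht', hrefl, div_mul_cancel₀ _ hne]
  -- identity theorem
  have hF : AnalyticOnNhd ℝ (fun t : ℝ => P t * Real.sin (Real.pi * (a + t))) Set.univ := by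
    intro x _
    refine AnalyticAt.mul ?_ ?_
    · exact Finset.analyticAt_fun_sum _ fun j _ => analyticAt_const.mul (analyticAt_id.pow j)
    · exact (analyticAt_realSin _).comp (analyticAt_const.mul (analyticAt_const.add analyticAt_id))
  have hG : AnalyticOnNhd ℝ (fun _ : ℝ => Real.pi) Set.univ := fun x _ => analyticAt_const
  have heq := hF.eq_of_eventuallyEq hG hEv
  have hval := congrFun heq (-a)
  simp only [add_neg_cancel, mul_zero, Real.sin_zero] at hval
  exact Real.pi_ne_zero hval.symm
end

section
/- The second derivative of the real Gamma function at 1 equals γ² + π²/6; that is, Γ^(2)(1) = γ² + π²/6. -/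
open Real Set Filter Topology

noncomputable def myP : ℝ → ℝ := fun x => deriv Real.Gamma x / Real.Gamma x
noncomputable def myQ : ℝ → ℝ := deriv myP

lemma analyticOnNhd_realGamma : AnalyticOnNhd ℝ Real.Gamma (Ioi (0:ℝ)) := by
  have hC : AnalyticOnNhd ℂ Complex.Gamma {z : ℂ | 0 < z.re} := by
    refine DifferentiableOn.analyticOnNhd (fun z hz => ?_) (isOpen_lt continuous_const Complex.continuous_re)
    refine (Complex.differentiableAt_Gamma _ fun m => ?_).differentiableWithinAt
    intro h
    rw [h] at hz
    simp only [mem_setOf_eq, Complex.neg_re, Complex.natCast_re] at hz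
    have : (0:ℝ) ≤ m := m.cast_nonneg
    linarith
  intro x hx
  have h1 : AnalyticAt ℝ (fun y : ℝ => (Complex.Gamma ↑y).re) x := by
    refine (Complex.reCLM.analyticAt _).comp ?_
    exact ((hC _ (by simpa using hx)).restrictScalars).comp (Complex.ofRealCLM.analyticAt x)
  have : Real.Gamma = fun y : ℝ => (Complex.Gamma ↑y).re := by
    funext y; rw [Complex.Gamma_ofReal, Complex.ofReal_re]
  rw [this]; exact h1

lemma diffAt_Gamma' {x : ℝ} (hx : 0 < x) : DifferentiableAt ℝ (deriv Real.Gamma) x :=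
  (analyticOnNhd_realGamma.deriv x hx).differentiableAt

lemma diffAt_myP {x : ℝ} (hx : 0 < x) : DifferentiableAt ℝ myP x :=
  (diffAt_Gamma' hx).div (analyticOnNhd_realGamma x hx).differentiableAt
    (Real.Gamma_pos_of_pos hx).ne'

lemma hasDerivAt_myP {x : ℝ} (hx : 0 < x) : HasDerivAt myP (myQ x) x :=
  (diffAt_myP hx).hasDerivAt

lemma hasDerivAt_logGamma {x : ℝ} (hx : 0 < x) :
    HasDerivAt (fun y => Real.log (Real.Gamma y)) (myP x) x :=
  ((analyticOnNhd_realGamma x hx).differentiableAt.hasDerivAt).log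
    (Real.Gamma_pos_of_pos hx).ne'

lemma sin_pi_mul_pos {s : ℝ} (hs : s ∈ Ioo (0:ℝ) 1) : 0 < Real.sin (π * s) := by
  apply Real.sin_pos_of_pos_of_lt_pi
  · exact mul_pos Real.pi_pos hs.1
  · nlinarith [Real.pi_pos, hs.2]

lemma reflect_log {s : ℝ} (hs : s ∈ Ioo (0:ℝ) 1) :
    Real.log (Real.Gamma s) + Real.log (Real.Gamma (1 - s)) =
      Real.log π - Real.log (Real.sin (π * s)) := by
  rw [← Real.log_mul (Real.Gamma_pos_of_pos hs.1).ne'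
      (Real.Gamma_pos_of_pos (by linarith [hs.2])).ne',
    Real.Gamma_mul_Gamma_one_sub,
    Real.log_div Real.pi_ne_zero (sin_pi_mul_pos hs).ne']

lemma reflect1 {s : ℝ} (hs : s ∈ Ioo (0:ℝ) 1) :
    myP s - myP (1 - s) = -(Real.cos (π * s) * π / Real.sin (π * s)) := by
  have h2 : HasDerivAt (fun t : ℝ => Real.log (Real.Gamma (1 - t)))
      (myP (1 - s) * (-1)) s :=
    (hasDerivAt_logGamma (by linarith [hs.2] : (0:ℝ) < 1 - s)).comp s
      ((hasDerivAt_id s).const_sub 1)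
  have H : HasDerivAt (fun t : ℝ => Real.log (Real.Gamma t) + Real.log (Real.Gamma (1 - t)))
      (myP s + myP (1 - s) * (-1)) s := (hasDerivAt_logGamma hs.1).add h2
  have hsin : HasDerivAt (fun t : ℝ => Real.sin (π * t)) (Real.cos (π * s) * π) s := by
    simpa [Function.comp_def] using (Real.hasDerivAt_sin (π * s)).comp s ((hasDerivAt_id s).const_mul π)
  have H2 : HasDerivAt (fun t : ℝ => Real.log π - Real.log (Real.sin (π * t)))
      (-(Real.cos (π * s) * π / Real.sin (π * s))) s :=
    (hsin.log (sin_pi_mul_pos hs).ne').const_sub _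
  have heq : (fun t : ℝ => Real.log (Real.Gamma t) + Real.log (Real.Gamma (1 - t))) =ᶠ[𝓝 s]
      (fun t : ℝ => Real.log π - Real.log (Real.sin (π * t))) := by
    filter_upwards [isOpen_Ioo.mem_nhds hs] with t ht using reflect_log ht
  have := H.deriv.symm.trans (heq.deriv_eq.trans H2.deriv)
  linarith [this]

lemma myQ_half : myQ (1/2 : ℝ) = π ^ 2 / 2 := by
  have hmem : (1/2 : ℝ) ∈ Ioo (0:ℝ) 1 := by norm_num
  have h2 : HasDerivAt (fun t : ℝ => myP (1 - t)) (myQ ((1:ℝ) - 1/2) * (-1)) (1/2) :=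
    (hasDerivAt_myP (by norm_num)).comp _ ((hasDerivAt_id _).const_sub 1)
  rw [show (1:ℝ) - 1/2 = 1/2 by norm_num] at h2
  have hG1 : HasDerivAt (fun t : ℝ => myP t - myP (1 - t))
      (myQ (1/2) - myQ (1/2) * (-1)) (1/2) := (hasDerivAt_myP (by norm_num)).sub h2
  have hc : HasDerivAt (fun t : ℝ => Real.cos (π * t) * π)
      (-Real.sin (π * (1/2)) * π * π) (1/2) := by
    simpa using ((Real.hasDerivAt_cos (π * (1/2))).comp _
      ((hasDerivAt_id _).const_mul π)).mul_const π
  have hd : HasDerivAt (fun t : ℝ => Real.sin (π * t)) (Real.cos (π * (1/2)) * π) (1/2) := by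
    simpa [Function.comp_def] using (Real.hasDerivAt_sin (π * (1/2))).comp _ ((hasDerivAt_id _).const_mul π)
  have hne : Real.sin (π * (1/2)) ≠ 0 := (sin_pi_mul_pos hmem).ne'
  have hG2 := ((hc.div hd hne)).neg
  have heq : (fun t : ℝ => myP t - myP (1 - t)) =ᶠ[𝓝 (1/2 : ℝ)]
      (fun t : ℝ => -(Real.cos (π * t) * π / Real.sin (π * t))) := by
    filter_upwards [isOpen_Ioo.mem_nhds hmem] with t ht using reflect1 ht
  have key := hG1.deriv.symm.trans (heq.deriv_eq.trans hG2.deriv)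
  rw [show π * (1/2 : ℝ) = π / 2 by ring, Real.sin_pi_div_two, Real.cos_pi_div_two] at key
  nlinarith [key]

lemma dup_log {s : ℝ} (hs : 0 < s) :
    Real.log (Real.Gamma s) + Real.log (Real.Gamma (s + 1/2)) =
      Real.log (Real.Gamma (2 * s)) + (1 - 2 * s) * Real.log 2 + Real.log (Real.sqrt π) := by
  have h := Real.Gamma_mul_Gamma_add_half s
  have h1 : Real.Gamma s ≠ 0 := (Real.Gamma_pos_of_pos hs).ne'
  have h2 : Real.Gamma (s + 1/2) ≠ 0 := (Real.Gamma_pos_of_pos (by linarith)).ne'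
  have h3 : Real.Gamma (2 * s) ≠ 0 := (Real.Gamma_pos_of_pos (by linarith)).ne'
  have h4 : ((2:ℝ) ^ (1 - 2 * s) : ℝ) ≠ 0 := (Real.rpow_pos_of_pos two_pos _).ne'
  have h5 : Real.sqrt π ≠ 0 := by positivity
  calc Real.log (Real.Gamma s) + Real.log (Real.Gamma (s + 1/2))
      = Real.log (Real.Gamma s * Real.Gamma (s + 1/2)) := (Real.log_mul h1 h2).symm
    _ = Real.log (Real.Gamma (2 * s) * (2:ℝ) ^ (1 - 2 * s) * Real.sqrt π) := by rw [h]
    _ = Real.log (Real.Gamma (2 * s)) + Real.log ((2:ℝ) ^ (1 - 2 * s)) + Real.log (Real.sqrt π) := by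
        rw [Real.log_mul (mul_ne_zero h3 h4) h5, Real.log_mul h3 h4]
    _ = _ := by rw [Real.log_rpow two_pos]

lemma dup1 {s : ℝ} (hs : 0 < s) :
    myP s + myP (s + 1/2) = 2 * myP (2 * s) - 2 * Real.log 2 := by
  have hL : HasDerivAt (fun t : ℝ => Real.log (Real.Gamma t) + Real.log (Real.Gamma (t + 1/2)))
      (myP s + myP (s + 1/2) * 1) s := by
    have hc := (hasDerivAt_logGamma (x := s + 1/2) (by linarith)).comp s
        ((hasDerivAt_id s).add_const (1/2))
    exact (hasDerivAt_logGamma hs).add hc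
  have hR : HasDerivAt (fun t : ℝ => Real.log (Real.Gamma (2 * t)) + (1 - 2 * t) * Real.log 2
      + Real.log (Real.sqrt π))
      (myP (2 * s) * 2 + -(2 * 1) * Real.log 2) s := by
    refine HasDerivAt.add_const _ ?_
    refine HasDerivAt.add ?_ ?_
    · exact (hasDerivAt_logGamma (by linarith : (0:ℝ) < 2 * s)).comp s
        (by simpa using (hasDerivAt_id s).const_mul 2)
    · exact (((hasDerivAt_id s).const_mul 2).const_sub 1).mul_const _
  have heq : (fun t : ℝ => Real.log (Real.Gamma t) + Real.log (Real.Gamma (t + 1/2))) =ᶠ[𝓝 s]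
      (fun t : ℝ => Real.log (Real.Gamma (2 * t)) + (1 - 2 * t) * Real.log 2
        + Real.log (Real.sqrt π)) := by
    filter_upwards [isOpen_Ioi.mem_nhds hs] with t ht using by
      rw [dup_log ht]
  have := hL.deriv.symm.trans (heq.deriv_eq.trans hR.deriv)
  linarith [this]

lemma myQ_one : myQ (1 : ℝ) = π ^ 2 / 6 := by
  have hcomp : HasDerivAt (fun t : ℝ => myP (t + 1/2)) (myQ ((1:ℝ)/2 + 1/2)) (1/2) :=
    HasDerivAt.comp_add_const _ _ (hasDerivAt_myP (by norm_num))
  have hL : HasDerivAt (fun t : ℝ => myP t + myP (t + 1/2))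
      (myQ (1/2) + myQ ((1:ℝ)/2 + 1/2)) (1/2) :=
    (hasDerivAt_myP (by norm_num)).add hcomp
  rw [show (1:ℝ)/2 + 1/2 = 1 by norm_num] at hL
  have hR : HasDerivAt (fun t : ℝ => 2 * myP (2 * t) - 2 * Real.log 2)
      (2 * (myQ (2 * (1/2 : ℝ)) * 2)) (1/2) := by
    refine HasDerivAt.sub_const _ ?_
    exact ((hasDerivAt_myP (x := 2 * (1/2 : ℝ)) (by norm_num)).comp _
      (by simpa using (hasDerivAt_id ((1:ℝ)/2)).const_mul 2)).const_mul 2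
  rw [show 2 * ((1:ℝ)/2) = 1 by norm_num] at hR
  have heq : (fun t : ℝ => myP t + myP (t + 1/2)) =ᶠ[𝓝 ((1:ℝ)/2)]
      (fun t : ℝ => 2 * myP (2 * t) - 2 * Real.log 2) := by
    filter_upwards [isOpen_Ioi.mem_nhds (by norm_num : (1/2:ℝ) ∈ Ioi (0:ℝ))] with t ht using dup1 ht
  have key := hL.deriv.symm.trans (heq.deriv_eq.trans hR.deriv)
  have h12 := myQ_half
  nlinarith [key]

/-- `Γ''(1) = γ² + π²/6`. -/
theorem gamma_second_deriv_one :
    iteratedDeriv 2 Real.Gamma 1 =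
      Real.eulerMascheroniConstant ^ 2 + π ^ 2 / 6 := by
  have h1 : (0:ℝ) < 1 := one_pos
  have heq : deriv Real.Gamma =ᶠ[𝓝 (1:ℝ)] fun x => Real.Gamma x * myP x := by
    filter_upwards [isOpen_Ioi.mem_nhds (mem_Ioi.mpr h1)] with t ht
    simp only [myP]
    rw [mul_div_cancel₀ _ (Real.Gamma_pos_of_pos ht).ne']
  have hprod : HasDerivAt (fun x => Real.Gamma x * myP x)
      (deriv Real.Gamma 1 * myP 1 + Real.Gamma 1 * myQ 1) 1 :=
    ((analyticOnNhd_realGamma 1 h1).differentiableAt.hasDerivAt).mul (hasDerivAt_myP h1)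
  have step : iteratedDeriv 2 Real.Gamma 1 = deriv Real.Gamma 1 * myP 1 + Real.Gamma 1 * myQ 1 := by
    rw [iteratedDeriv_succ, iteratedDeriv_one]
    exact heq.deriv_eq.trans hprod.deriv
  have hP1 : myP 1 = -Real.eulerMascheroniConstant := by
    simp only [myP, Real.Gamma_one, div_one]
    rw [Real.eulerMascheroniConstant_eq_neg_deriv, neg_neg]
  have hd1 : deriv Real.Gamma 1 = -Real.eulerMascheroniConstant := by
    rw [Real.eulerMascheroniConstant_eq_neg_deriv, neg_neg]
  rw [step, hP1, hd1, myQ_one, Real.Gamma_one]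
  ring
end
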